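/- For the balanced complete k-partite graph K_{k*n} (all partite sets of size n), the minimum d ≥ 1 satisfying condition (i) or (ii) of the threshold definition satisfies: if k ≥ 2, then d is the least positive integer such that d ∤ n or n/⌊n/d⌋ > d+1, and the equitable chromatic threshold equals k·⌈n/d⌉. -/

import Mathlib

open Finset


/-- An equitable `q`-coloring of the complete multipartite graph (classes may be
empty), each class within one partite set, sizes differing by at most one. -/
def EqColoring {k : ℕ} (n : Fin k → ℕ) (q : ℕ) : Prop :=
  ∃ (sz : Fin q → ℕ) (a : Fin q → Fin k),
    (∀ c c', sz c ≤ sz c' + 1) ∧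
    (∀ i, ∑ c ∈ Finset.univ.filter (fun c => a c = i), sz c = n i)

lemma sum_fin_card (t N : ℕ) (h : t ≤ N) :
    (∑ j : Fin N, if (j:ℕ) < t then 1 else 0) = t := by
  rw [Fin.sum_univ_eq_sum_range (fun j => if j < t then 1 else 0), ← Finset.card_filter]
  have : (Finset.range N).filter (· < t) = Finset.range t := by ext x; simp; omega
  rw [this, Finset.card_range]

lemma exists_coloring {k : ℕ} (n q m : ℕ) (b : Fin k → ℕ) (hsum : ∑ i, b i = q)
    (h1 : ∀ i, b i * m ≤ n) (h2 : ∀ i, n ≤ b i * (m + 1)) :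
    EqColoring (fun _ : Fin k => n) q := by
  have hcard : Fintype.card (Σ i : Fin k, Fin (b i)) = q := by
    simp [Fintype.card_sigma, hsum]
  let e : (Σ i : Fin k, Fin (b i)) ≃ Fin q := Fintype.equivFinOfCardEq hcard
  refine ⟨fun c => m + if ((e.symm c).2 : ℕ) < n - b (e.symm c).1 * m then 1 else 0,
    fun c => (e.symm c).1, ?_, ?_⟩
  · intro c c'
    dsimp only
    split <;> split <;> omega
  · intro i
    have hre : ∀ (f : Fin q → ℕ),
        ∑ c ∈ Finset.univ.filter (fun c => (e.symm c).1 = i), f c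
          = ∑ x ∈ Finset.univ.filter (fun x : (Σ i : Fin k, Fin (b i)) => x.1 = i), f (e x) := by
      intro f
      refine Finset.sum_nbij' (fun c => e.symm c) (fun x => e x) ?_ ?_ ?_ ?_ ?_ <;> simp
    rw [hre]
    have hfilt : Finset.univ.filter (fun x : (Σ i : Fin k, Fin (b i)) => x.1 = i)
        = ({i} : Finset (Fin k)).sigma (fun _ => Finset.univ) := by
      ext ⟨a, j⟩; simp
    rw [hfilt, Finset.sum_sigma, Finset.sum_singleton]
    have hcong : ∀ j : Fin (b i),
        (m + if ((e.symm (e ⟨i, j⟩)).2 : ℕ) < n - b (e.symm (e ⟨i, j⟩)).1 * m then 1 else 0)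
          = m + if (j : ℕ) < n - b i * m then 1 else 0 := by
      intro j; rw [e.symm_apply_apply]
    rw [Finset.sum_congr rfl (fun j _ => hcong j)]

    rw [Finset.sum_add_distrib, Finset.sum_const, Finset.card_univ, Fintype.card_fin, smul_eq_mul,
      sum_fin_card (n - b i * m) (b i) (by have h4 := h2 i; rw [Nat.mul_succ] at h4; omega)]
    have h3 := h1 i
    simp only []
    omega

lemma yes_coloring {k n d : ℕ} (hk : 2 ≤ k) (hn : 1 ≤ n) (hd1 : 1 ≤ d) (hdn : ¬ d ∣ n)
    (hmin : ∀ e, 1 ≤ e → e < d → e ∣ n) :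
    ∀ r, k * (n / d + 1) ≤ r → EqColoring (fun _ : Fin k => n) r := by
  intro r hr
  have hd2 : 2 ≤ d := by
    rcases Nat.lt_or_ge d 2 with h | h
    · have hd1' : d = 1 := by omega
      subst hd1'
      exact absurd (one_dvd n) hdn
    · exact h
  have hk0 : 0 < k := by omega
  obtain ⟨q', s, hs, hr'⟩ : ∃ q' s, s < k ∧ r = k * q' + s :=
    ⟨r / k, r % k, Nat.mod_lt r hk0, (Nat.div_add_mod r k).symm⟩
  obtain ⟨m, hm⟩ : ∃ m, m = n / (q' + 1) := ⟨_, rfl⟩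
  have hq' : n / d + 1 ≤ q' := by
    by_contra hc
    push_neg at hc
    have h2 : k * (q' + 1) ≤ k * (n / d + 1) := Nat.mul_le_mul_left k (by omega)
    have h3 : k * (q' + 1) = k * q' + k := by ring
    omega
  have hfloor : (q' + 1) * m ≤ n := by
    calc (q' + 1) * m = n / (q' + 1) * (q' + 1) := by rw [hm]; ring
      _ ≤ n := Nat.div_mul_le_self n (q' + 1)
  have hmd : m < d := by
    by_contra h
    push_neg at h
    have e2 : (n / d + 2) * d ≤ (q' + 1) * m := Nat.mul_le_mul (by omega) h
    have e3 : (n / d + 2) * d = n / d * d + 2 * d := by ring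
    have e4 := Nat.div_add_mod n d
    have e5 := Nat.mod_lt n (show 0 < d by omega)
    have e6 : d * (n / d) = n / d * d := by ring
    omega
  have hkey : n ≤ q' * (m + 1) := by
    rcases Nat.eq_zero_or_pos m with hm0 | hm1
    · have h1 : n / (q' + 1) = 0 := by omega
      have h2 : n < q' + 1 := by
        by_contra hc
        push_neg at hc
        have := Nat.one_le_div_iff (show 0 < q' + 1 by omega) |>.2 hc
        omega
      calc n ≤ q' := by omega
        _ = q' * (0 + 1) := by ring
        _ = q' * (m + 1) := by rw [hm0]
    · have hlt : n < (q' + 1) * (m + 1) := by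
        have e1 := Nat.div_add_mod n (q' + 1)
        have e2 : n % (q' + 1) < q' + 1 := Nat.mod_lt n (by omega)
        have e3 : (q' + 1) * (m + 1) = (q' + 1) * m + (q' + 1) := by ring
        have e4 : (q' + 1) * (n / (q' + 1)) = (q' + 1) * m := by rw [hm]
        omega
      rcases Nat.lt_or_ge (m + 1) d with hcase | hcase
      · obtain ⟨t, ht⟩ := hmin (m + 1) (by omega) hcase
        have ht' : t < q' + 1 := by
          by_contra hc
          push_neg at hc
          have h2 : (q' + 1) * (m + 1) ≤ (m + 1) * t := by
            calc (q' + 1) * (m + 1) ≤ t * (m + 1) := Nat.mul_le_mul_right _ hc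
              _ = (m + 1) * t := by ring
          omega
        calc n = (m + 1) * t := ht
          _ ≤ (m + 1) * q' := Nat.mul_le_mul_left _ (by omega)
          _ = q' * (m + 1) := by ring
      · have hcase' : m + 1 = d := by omega
        have e4 := Nat.div_add_mod n d
        have e5 := Nat.mod_lt n (show 0 < d by omega)
        have h6 : n ≤ (n / d + 1) * d := by
          have : (n / d + 1) * d = d * (n / d) + d := by ring
          omega
        calc n ≤ (n / d + 1) * d := h6
          _ ≤ q' * d := Nat.mul_le_mul_right _ (by omega)
          _ = q' * (m + 1) := by rw [hcase']
  apply exists_coloring n r m (fun i => q' + if (i : ℕ) < s then 1 else 0)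
  · rw [Finset.sum_add_distrib, Finset.sum_const, Finset.card_univ, Fintype.card_fin,
      smul_eq_mul, sum_fin_card s k (le_of_lt hs)]
    omega
  · intro i
    calc (q' + if (i : ℕ) < s then 1 else 0) * m ≤ (q' + 1) * m := by
          apply Nat.mul_le_mul_right; split <;> omega
      _ ≤ n := hfloor
  · intro i
    calc n ≤ q' * (m + 1) := hkey
      _ ≤ (q' + if (i : ℕ) < s then 1 else 0) * (m + 1) := by
          apply Nat.mul_le_mul_right; split <;> omega

lemma no_coloring {k n d : ℕ} (hk : 2 ≤ k) (hn : 1 ≤ n) (hd1 : 1 ≤ d) (hdn : ¬ d ∣ n)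
    (hmin : ∀ e, 1 ≤ e → e < d → e ∣ n) :
    ¬ EqColoring (fun _ : Fin k => n) (k * (n / d + 1) - 1) := by
  have hd2 : 2 ≤ d := by
    rcases Nat.lt_or_ge d 2 with h | h
    · have hd1' : d = 1 := by omega
      subst hd1'
      exact absurd (one_dvd n) hdn
    · exact h
  rintro ⟨sz, a, hsz, hsum⟩
  have hkE : 2 ≤ k * (n / d + 1) := by
    calc 2 = 2 * 1 := by ring
      _ ≤ k * (n / d + 1) := Nat.mul_le_mul hk (Nat.le_add_left 1 (n / d))
  have hr1 : 1 ≤ k * (n / d + 1) - 1 := by omega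
  obtain ⟨c₀, -, hc₀⟩ := Finset.exists_min_image Finset.univ sz ⟨⟨0, by omega⟩, Finset.mem_univ _⟩
  obtain ⟨m, hm⟩ : ∃ m, m = sz c₀ := ⟨_, rfl⟩
  have hBsum : ∑ i, (Finset.univ.filter (fun c => a c = i)).card = k * (n / d + 1) - 1 := by
    have h := Finset.card_eq_sum_card_fiberwise
      (f := a) (s := Finset.univ) (t := Finset.univ) (fun x _ => Finset.mem_univ _)
    rw [Finset.card_univ, Fintype.card_fin] at h
    exact h.symm
  have hlo : ∀ i : Fin k, (Finset.univ.filter (fun c => a c = i)).card * m ≤ n := by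
    intro i
    have h1 := Finset.card_nsmul_le_sum (Finset.univ.filter (fun c => a c = i)) sz m
      (fun c _ => hm ▸ hc₀ c (Finset.mem_univ c))
    rw [hsum i] at h1
    simpa [smul_eq_mul] using h1
  have hhi : ∀ i : Fin k, n ≤ (Finset.univ.filter (fun c => a c = i)).card * (m + 1) := by
    intro i
    have h1 := Finset.sum_le_card_nsmul (Finset.univ.filter (fun c => a c = i)) sz (m + 1)
      (fun c _ => hm ▸ hsz c c₀)
    rw [hsum i] at h1
    simpa [smul_eq_mul] using h1
  have hprod : k * (n / d + 1) = k * (n / d) + k := by ring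
  rcases Nat.eq_zero_or_pos m with hm0 | hm1
  · have h1 : ∀ i : Fin k, n ≤ (Finset.univ.filter (fun c => a c = i)).card := by
      intro i; have := hhi i; rw [hm0] at this; omega
    have h2 : k * n ≤ ∑ i : Fin k, (Finset.univ.filter (fun c => a c = i)).card := by
      calc k * n = ∑ _i : Fin k, n := by
            rw [Finset.sum_const, Finset.card_univ, Fintype.card_fin, smul_eq_mul]
        _ ≤ _ := Finset.sum_le_sum (fun i _ => h1 i)
    have h3 : n / d < n := Nat.div_lt_self (by omega) (by omega)
    have h4 : k * (n / d + 1) ≤ k * n := Nat.mul_le_mul_left k (by omega)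
    omega
  · rcases Nat.lt_or_ge m d with hcase | hcase
    · have h1 : ∀ i : Fin k, n / d + 1 ≤ (Finset.univ.filter (fun c => a c = i)).card := by
        intro i
        by_contra hc
        push_neg at hc
        have h2 : n ≤ (Finset.univ.filter (fun c => a c = i)).card * d := by
          calc n ≤ (Finset.univ.filter (fun c => a c = i)).card * (m + 1) := hhi i
            _ ≤ (Finset.univ.filter (fun c => a c = i)).card * d :=
                Nat.mul_le_mul_left _ (by omega)
        have h3 : (Finset.univ.filter (fun c => a c = i)).card * d ≤ n / d * d :=
          Nat.mul_le_mul_right _ (by omega)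
        have h4 : n / d * d ≤ n := Nat.div_mul_le_self n d
        have h5 : n / d * d = n := by omega
        exact hdn (Dvd.intro_left (n / d) h5)
      have h2 : k * (n / d + 1) ≤ ∑ i : Fin k, (Finset.univ.filter (fun c => a c = i)).card := by
        calc k * (n / d + 1) = ∑ _i : Fin k, (n / d + 1) := by
              rw [Finset.sum_const, Finset.card_univ, Fintype.card_fin, smul_eq_mul]
          _ ≤ _ := Finset.sum_le_sum (fun i _ => h1 i)
      omega
    · have h1 : ∀ i : Fin k, (Finset.univ.filter (fun c => a c = i)).card ≤ n / d := by
        intro i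
        rw [Nat.le_div_iff_mul_le (show 0 < d by omega)]
        calc (Finset.univ.filter (fun c => a c = i)).card * d
            ≤ (Finset.univ.filter (fun c => a c = i)).card * m := Nat.mul_le_mul_left _ hcase
          _ ≤ n := hlo i
      have h2 : ∑ i : Fin k, (Finset.univ.filter (fun c => a c = i)).card ≤ k * (n / d) := by
        calc ∑ i : Fin k, (Finset.univ.filter (fun c => a c = i)).card
            ≤ ∑ _i : Fin k, n / d := Finset.sum_le_sum (fun i _ => h1 i)
          _ = k * (n / d) := by
              rw [Finset.sum_const, Finset.card_univ, Fintype.card_fin, smul_eq_mul]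
      omega

lemma dvd_not_strict {n d : ℕ} (hn : 1 ≤ n) (hd : 1 ≤ d) (hdvd : d ∣ n) :
    ¬ ((d : ℚ) + 1 < (n : ℚ) / ((n / d : ℕ) : ℚ)) := by
  intro h
  rw [Nat.cast_div hdvd (by positivity)] at h
  have hd0 : (d : ℚ) ≠ 0 := by positivity
  have hn0 : (n : ℚ) ≠ 0 := by positivity
  rw [div_div_eq_mul_div, mul_comm, mul_div_assoc, div_self hn0, mul_one] at h
  linarith


theorem stmt_17 (k n : ℕ) (hk : 2 ≤ k) (hn : 1 ≤ n) :
    sInf {d : ℕ | 1 ≤ d ∧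
        ((∃ i j : Fin k, i ≠ j ∧ ¬ d ∣ n ∧ ¬ d ∣ n) ∨
         (d : ℚ) + 1 < (n : ℚ) / ((n / d : ℕ) : ℚ))} =
      sInf {d : ℕ | 1 ≤ d ∧ (¬ d ∣ n ∨ (d : ℚ) + 1 < (n : ℚ) / ((n / d : ℕ) : ℚ))} ∧
    IsLeast {p : ℕ | ∀ r, p ≤ r → EqColoring (fun _ : Fin k => n) r}
      (k * ((n + sInf {d : ℕ | 1 ≤ d ∧
          (¬ d ∣ n ∨ (d : ℚ) + 1 < (n : ℚ) / ((n / d : ℕ) : ℚ))} - 1) /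
        sInf {d : ℕ | 1 ≤ d ∧
          (¬ d ∣ n ∨ (d : ℚ) + 1 < (n : ℚ) / ((n / d : ℕ) : ℚ))})) := by
  have hsetA : {d : ℕ | 1 ≤ d ∧
        ((∃ i j : Fin k, i ≠ j ∧ ¬ d ∣ n ∧ ¬ d ∣ n) ∨
         (d : ℚ) + 1 < (n : ℚ) / ((n / d : ℕ) : ℚ))} =
      {d : ℕ | 1 ≤ d ∧ ¬ d ∣ n} := by
    ext d
    simp only [Set.mem_setOf_eq]
    constructor
    · rintro ⟨h1, h2 | h2⟩
      · obtain ⟨i, j, -, h3, -⟩ := h2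
        exact ⟨h1, h3⟩
      · exact ⟨h1, fun hdvd => dvd_not_strict hn h1 hdvd h2⟩
    · rintro ⟨h1, h2⟩
      exact ⟨h1, Or.inl ⟨⟨0, by omega⟩, ⟨1, by omega⟩, by simp [Fin.ext_iff], h2, h2⟩⟩
  have hsetB : {d : ℕ | 1 ≤ d ∧ (¬ d ∣ n ∨ (d : ℚ) + 1 < (n : ℚ) / ((n / d : ℕ) : ℚ))} =
      {d : ℕ | 1 ≤ d ∧ ¬ d ∣ n} := by
    ext d
    simp only [Set.mem_setOf_eq]
    constructor
    · rintro ⟨h1, h2 | h2⟩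
      · exact ⟨h1, h2⟩
      · exact ⟨h1, fun hdvd => dvd_not_strict hn h1 hdvd h2⟩
    · rintro ⟨h1, h2⟩
      exact ⟨h1, Or.inl h2⟩
  have hne : {d : ℕ | 1 ≤ d ∧ ¬ d ∣ n}.Nonempty := by
    refine ⟨n + 1, by omega, fun h => ?_⟩
    have := Nat.le_of_dvd (by omega) h
    omega
  rw [hsetA, hsetB]
  obtain ⟨hD1, hDn⟩ := Nat.sInf_mem hne
  have hmin : ∀ e, 1 ≤ e → e < sInf {d : ℕ | 1 ≤ d ∧ ¬ d ∣ n} → e ∣ n := by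
    intro e he hlt
    by_contra h
    have := Nat.sInf_le (show e ∈ {d : ℕ | 1 ≤ d ∧ ¬ d ∣ n} from ⟨he, h⟩)
    omega
  have hceil : (n + sInf {d : ℕ | 1 ≤ d ∧ ¬ d ∣ n} - 1) / sInf {d : ℕ | 1 ≤ d ∧ ¬ d ∣ n}
      = n / sInf {d : ℕ | 1 ≤ d ∧ ¬ d ∣ n} + 1 := by
    generalize hD : sInf {d : ℕ | 1 ≤ d ∧ ¬ d ∣ n} = D at hD1 hDn
    have e1 := Nat.div_add_mod n D
    have e2 : n % D < D := Nat.mod_lt n (by omega)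
    have e3 : n % D ≠ 0 := fun h => hDn (Nat.dvd_of_mod_eq_zero h)
    apply Nat.div_eq_of_lt_le
    · have : (n / D + 1) * D = D * (n / D) + D := by ring
      omega
    · have : (n / D + 1 + 1) * D = D * (n / D) + 2 * D := by ring
      omega
  refine ⟨rfl, ?_, ?_⟩
  · intro r hr
    rw [hceil] at hr
    exact yes_coloring hk hn hD1 hDn hmin r hr
  · intro p hp
    rw [hceil]
    by_contra hc
    push_neg at hc
    have h1 : p ≤ k * (n / sInf {d : ℕ | 1 ≤ d ∧ ¬ d ∣ n} + 1) - 1 := by omega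
    exact no_coloring hk hn hD1 hDn hmin (hp _ h1)
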